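/- arXiv:2407.15742 — 5 statements merged into one kernel-verified Lean document; each statement's English description precedes it below -/
import Mathlib

section
/- For β, ρ > 0 and k ∈ ℕ with k ≥ 1, the function U₂(x) = log(8k²β^{2k}/(|x^k − ρ^k|² + β^{2k})²) solves -ΔU₂(x) = |x|^{2k−2} e^{U₂(x)} on ℝ², where x^k denotes the k-th complex power of x identified with a complex number. -/
noncomputable def lapC (f : ℂ → ℝ) (x : ℂ) : ℝ :=
  fderiv ℝ (fun y => fderiv ℝ f y (1 : ℂ)) x (1 : ℂ) +
  fderiv ℝ (fun y => fderiv ℝ f y Complex.I) x Complex.I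

open Complex

/-- multiplication by `a` followed by real part, as a real CLM -/
noncomputable def mre (a : ℂ) : ℂ →L[ℝ] ℝ :=
  Complex.reCLM.comp ((ContinuousLinearMap.mul ℂ ℂ a).restrictScalars ℝ)

@[simp] lemma mre_apply (a v : ℂ) : mre a v = (a * v).re := rfl

/-- multiplication by `a`, as a real CLM -/
noncomputable def cml (a : ℂ) : ℂ →L[ℝ] ℂ :=
  (ContinuousLinearMap.mul ℂ ℂ a).restrictScalars ℝ

@[simp] lemma cml_apply (a v : ℂ) : cml a v = a * v := rfl

lemma hasFDerivAt_pow_sub (k : ℕ) (c z : ℂ) :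
    HasFDerivAt (fun z : ℂ => z ^ k - c) (cml ((k : ℂ) * z ^ (k - 1))) z := by
  have h := (((hasDerivAt_pow k z).sub_const c).hasFDerivAt).restrictScalars ℝ
  refine h.congr_fderiv ?_
  ext v
  simp [mul_comm]

lemma hasFDerivAt_normSq_comp {f : ℂ → ℂ} {f' : ℂ →L[ℝ] ℂ} {z : ℂ}
    (h : HasFDerivAt f f' z) :
    HasFDerivAt (fun z => Complex.normSq (f z)) ((2:ℝ) • (Complex.reCLM.comp
      (((ContinuousLinearMap.mul ℂ ℂ ((starRingEnd ℂ) (f z))).restrictScalars ℝ).comp f'))) z := by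
  have hre : HasFDerivAt (fun z => (f z).re) (Complex.reCLM.comp f') z :=
    (Complex.reCLM.hasFDerivAt).comp z h
  have him : HasFDerivAt (fun z => (f z).im) (Complex.imCLM.comp f') z :=
    (Complex.imCLM.hasFDerivAt).comp z h
  have h2 := (hre.mul hre).add (him.mul him)
  have heq : (fun z => Complex.normSq (f z))
      = fun z => (f z).re * (f z).re + (f z).im * (f z).im := by
    funext w; simp [Complex.normSq_apply]
  rw [heq]
  refine h2.congr_fderiv ?_
  ext v
  simp [Complex.mul_re]
  ring

/-- the key derivative of `g z = |z^k-c|^2 + b`. -/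
lemma hasFDerivAt_g (k : ℕ) (c : ℂ) (b : ℝ) (z : ℂ) :
    HasFDerivAt (fun z : ℂ => Complex.normSq (z ^ k - c) + b)
      ((2:ℝ) • mre ((starRingEnd ℂ) (z ^ k - c) * ((k : ℂ) * z ^ (k - 1)))) z := by
  have h := (hasFDerivAt_normSq_comp (hasFDerivAt_pow_sub k c z)).add_const b
  refine h.congr_fderiv ?_
  ext v
  simp [mre, mul_assoc, Complex.mul_re]
  ring

set_option maxHeartbeats 1000000 in
theorem singular_liouville_bubble (k : ℕ) (hk : 1 ≤ k) (β ρ : ℝ) (hβ : 0 < β) (hρ : 0 < ρ) :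
    ∀ x : ℂ,
      -lapC (fun z => Real.log (8 * (k : ℝ) ^ 2 * β ^ (2 * k) /
          ((‖z ^ k - (ρ : ℂ) ^ k‖ ^ 2 + β ^ (2 * k)) ^ 2))) x =
        ‖x‖ ^ (2 * k - 2) *
          Real.exp (Real.log (8 * (k : ℝ) ^ 2 * β ^ (2 * k) /
            ((‖x ^ k - (ρ : ℂ) ^ k‖ ^ 2 + β ^ (2 * k)) ^ 2))) := by
  intro x
  set c : ℂ := (ρ : ℂ) ^ k with hc
  set b : ℝ := β ^ (2 * k) with hbdef
  have hb : 0 < b := pow_pos hβ _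
  have hkR : (0:ℝ) < (k:ℝ) := by exact_mod_cast hk
  have hC : 0 < 8 * (k:ℝ)^2 * b := by positivity
  set g : ℂ → ℝ := fun z => Complex.normSq (z ^ k - c) + b with hgdef
  have hgpos : ∀ z, 0 < g z := fun z =>
    add_pos_of_nonneg_of_pos (Complex.normSq_nonneg _) hb
  -- rewrite the function as a difference of logs
  have hfun : (fun z => Real.log (8 * (k : ℝ) ^ 2 * β ^ (2 * k) /
          ((‖z ^ k - (ρ : ℂ) ^ k‖ ^ 2 + β ^ (2 * k)) ^ 2)))
      = fun z => Real.log (8 * (k:ℝ)^2 * b) - 2 * Real.log (g z) := by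
    funext z
    have h1 : ‖z ^ k - c‖ ^ 2 + b = g z := by
      rw [hgdef]; simp [Complex.sq_norm]
    rw [← hbdef, ← hc, h1, Real.log_div hC.ne' (pow_ne_zero _ (hgpos z).ne'),
      Real.log_pow]
    push_cast; ring
  -- the first derivative
  set U : ℂ → ℝ := fun z => Real.log (8 * (k:ℝ)^2 * b) - 2 * Real.log (g z) with hUdef
  set Dq : ℂ → ℂ := fun z => (starRingEnd ℂ) (z ^ k - c) * ((k : ℂ) * z ^ (k - 1)) with hDq
  have hU : ∀ z, HasFDerivAt U (mre ((((-4:ℝ) / g z)) • Dq z)) z := by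
    intro z
    have hlog : HasFDerivAt (fun z => Real.log (g z))
        ((g z)⁻¹ • ((2:ℝ) • mre (Dq z))) z := (hasFDerivAt_g k c b z).log (hgpos z).ne'
    have h2 := (hasFDerivAt_const (Real.log (8 * (k:ℝ)^2 * b)) z).sub (hlog.const_mul 2)
    refine h2.congr_fderiv ?_
    ext v
    have hne := (hgpos z).ne'
    simp [Complex.smul_re]
    field_simp
    ring
  have hfd : ∀ v z, fderiv ℝ U z v = (-4) * ((Dq z * v).re * (g z)⁻¹) := by
    intro v z
    rw [(hU z).fderiv]
    have hne := (hgpos z).ne'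
    simp [Complex.smul_re]
    field_simp
    ring
  -- second derivative data
  set a : ℂ := x ^ k - c with ha
  set d : ℂ := (k : ℂ) * x ^ (k - 1) with hd
  set e : ℂ := (k : ℂ) * (((k - 1 : ℕ) : ℂ) * x ^ (k - 1 - 1)) with he
  have key : ∀ v : ℂ,
      fderiv ℝ (fun y => fderiv ℝ U y v) x v =
        (-4) * ((((starRingEnd ℂ) (v * d) * d + (starRingEnd ℂ) a * (v * e)) * v).re * g x
          - (Dq x * v).re * (2 * (Dq x * v).re)) / (g x) ^ 2 := by
    intro v
    have hrw : (fun y => fderiv ℝ U y v) = fun y => (-4) * ((Dq y * v).re * (g y)⁻¹) := by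
      funext y; exact hfd v y
    rw [hrw]
    -- derivative of numerator
    have hconj : HasFDerivAt (fun y : ℂ => (starRingEnd ℂ) (y ^ k - c))
        ((Complex.conjCLE.toContinuousLinearMap).comp (cml ((k:ℂ) * x ^ (k-1)))) x :=
      (Complex.conjCLE.toContinuousLinearMap.hasFDerivAt).comp x (hasFDerivAt_pow_sub k c x)
    have hm : HasFDerivAt (fun y : ℂ => (k : ℂ) * y ^ (k - 1)) (cml e) x := by
      have h := (((hasDerivAt_pow (k-1) x).const_mul (k:ℂ)).hasFDerivAt).restrictScalars ℝ
      refine h.congr_fderiv ?_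
      ext v
      simp [he, mul_comm]
    have hprod := (hconj.mul hm).mul_const v
    have hN := (Complex.reCLM.hasFDerivAt).comp x hprod
    have hinv : HasFDerivAt (fun y => (g y)⁻¹)
        (-((g x) ^ 2)⁻¹ • ((2:ℝ) • mre (Dq x))) x := by
      have h := (hasDerivAt_inv (hgpos x).ne').comp_hasFDerivAt x (hasFDerivAt_g k c b x)
      exact h
    have hfinal := (hN.mul hinv).const_mul (-4 : ℝ)
    have hfinal' : HasFDerivAt (fun y => (-4:ℝ) * ((Dq y * v).re * (g y)⁻¹))
        ((-4:ℝ) • ((Dq x * v).re • (-((g x) ^ 2)⁻¹ • ((2:ℝ) • mre (Dq x))) +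
          (g x)⁻¹ • Complex.reCLM.comp (v • ((starRingEnd ℂ) (x ^ k - c) • cml e +
            ((k:ℂ) * x ^ (k - 1)) • (Complex.conjCLE.toContinuousLinearMap).comp
              (cml ((k:ℂ) * x ^ (k - 1))))) )) x := hfinal
    rw [hfinal'.fderiv]
    have hne := (hgpos x).ne'
    simp [mre, hDq, ha, hd, Complex.smul_re]
    field_simp
    ring
  -- put the two directions together
  rw [hfun]
  show -(fderiv ℝ (fun y => fderiv ℝ U y 1) x 1 + fderiv ℝ (fun y => fderiv ℝ U y I) x I)
      = _
  rw [key 1, key I]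
  -- final algebra
  have hgx : g x = Complex.normSq a + b := by rw [hgdef]
  have hDqx : Dq x = (starRingEnd ℂ) a * d := by rw [hDq]
  have hne : Complex.normSq a + b ≠ 0 := by
    have := hgpos x; rw [hgx] at this; exact this.ne'
  have hsum : -((-4) * ((((starRingEnd ℂ) (1 * d) * d + (starRingEnd ℂ) a * (1 * e)) * 1).re * g x
          - (Dq x * 1).re * (2 * (Dq x * 1).re)) / (g x) ^ 2
        + (-4) * ((((starRingEnd ℂ) (I * d) * d + (starRingEnd ℂ) a * (I * e)) * I).re * g x
          - (Dq x * I).re * (2 * (Dq x * I).re)) / (g x) ^ 2)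
      = 8 * b * Complex.normSq d / (g x) ^ 2 := by
    rw [hDqx, hgx]
    field_simp
    simp [Complex.normSq_apply, Complex.mul_re, Complex.mul_im, Complex.conj_re,
      Complex.conj_im, Complex.I_re, Complex.I_im]
    ring
  rw [hsum]
  -- identify with the RHS
  have habs : Complex.normSq d = (k:ℝ)^2 * ‖x‖ ^ (2 * k - 2) := by
    have h2 : 2 * (k - 1) = 2 * k - 2 := by omega
    rw [hd, Complex.normSq_mul, map_pow, Complex.normSq_natCast,
      Complex.normSq_eq_norm_sq, ← pow_mul, h2]
    ring
  have hexp : Real.exp (Real.log (8 * (k : ℝ) ^ 2 * β ^ (2 * k) /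
      ((‖x ^ k - (ρ : ℂ) ^ k‖ ^ 2 + β ^ (2 * k)) ^ 2)))
      = 8 * (k:ℝ)^2 * b / (g x)^2 := by
    have h1 : ‖x ^ k - c‖ ^ 2 + b = g x := by
      rw [hgdef]; simp [Complex.sq_norm]
    rw [← hbdef, ← hc, h1, Real.exp_log]
    positivity
  rw [hexp, habs]
  ring
end

section
/- The constant C₁ := ∫₀^∞ r · ((r²−1)/(r²+1)) · e^{U(r)} · (U(r)²/2) dr equals 12(1 − log 2), where U(r) = log(8/(r²+1)²). -/
noncomputable def U (r : ℝ) : ℝ := Real.log (8 / ((r ^ 2 + 1) ^ 2))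

noncomputable def Faux (r : ℝ) : ℝ :=
  ((2 - 2 * (r ^ 2 + 1)) * (Real.log 8 - 2 * Real.log (r ^ 2 + 1)) ^ 2
    + (8 * (r ^ 2 + 1) - 4) * (Real.log 8 - 2 * Real.log (r ^ 2 + 1))
    + (4 - 16 * (r ^ 2 + 1))) / (r ^ 2 + 1) ^ 2

lemma t_pos (r : ℝ) : (0:ℝ) < r ^ 2 + 1 := by positivity

lemma U_eq (r : ℝ) : U r = Real.log 8 - 2 * Real.log (r ^ 2 + 1) := by
  unfold U
  rw [Real.log_div (by norm_num) (by positivity), Real.log_pow]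
  push_cast; ring

lemma expU (r : ℝ) : Real.exp (U r) = 8 / ((r ^ 2 + 1) ^ 2) :=
  Real.exp_log (by positivity)

lemma Faux_deriv (r : ℝ) :
    HasDerivAt Faux (r * ((r ^ 2 - 1) / (r ^ 2 + 1)) * Real.exp (U r) * (U r ^ 2 / 2)) r := by
  have htne : (r ^ 2 + 1) ≠ 0 := (t_pos r).ne'
  have ht : HasDerivAt (fun r : ℝ => r ^ 2 + 1) (2 * r) r := by
    simpa using (hasDerivAt_pow 2 r).add_const 1
  have hlog : HasDerivAt (fun r : ℝ => Real.log (r ^ 2 + 1)) (2 * r / (r ^ 2 + 1)) r :=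
    ht.log htne
  have hX : HasDerivAt (fun r : ℝ => Real.log 8 - 2 * Real.log (r ^ 2 + 1))
      (0 - 2 * (2 * r / (r ^ 2 + 1))) r :=
    (hasDerivAt_const r (Real.log 8)).sub (hlog.const_mul 2)
  set X := fun r : ℝ => Real.log 8 - 2 * Real.log (r ^ 2 + 1) with hXdef
  set X' : ℝ := 0 - 2 * (2 * r / (r ^ 2 + 1)) with hX'def
  have h1 : HasDerivAt (fun r : ℝ => (2 - 2 * (r ^ 2 + 1)) * X r ^ 2)
      ((0 - 2 * (2 * r)) * X r ^ 2 + (2 - 2 * (r ^ 2 + 1)) * (2 * X r ^ 1 * X')) r :=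
    ((hasDerivAt_const r (2:ℝ)).sub (ht.const_mul 2)).mul (hX.pow 2)
  have h2 : HasDerivAt (fun r : ℝ => (8 * (r ^ 2 + 1) - 4) * X r)
      ((8 * (2 * r) - 0) * X r + (8 * (r ^ 2 + 1) - 4) * X') r :=
    ((ht.const_mul 8).sub (hasDerivAt_const r (4:ℝ))).mul hX
  have h3 : HasDerivAt (fun r : ℝ => (4 : ℝ) - 16 * (r ^ 2 + 1)) (0 - 16 * (2 * r)) r :=
    (hasDerivAt_const r (4:ℝ)).sub (ht.const_mul 16)
  have hden : HasDerivAt (fun r : ℝ => (r ^ 2 + 1) ^ 2)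
      ((2 : ℕ) * (r ^ 2 + 1) ^ 1 * (2 * r)) r := ht.pow 2
  have hF := ((h1.add h2).add h3).div hden (pow_ne_zero 2 htne)
  convert hF using 1
  · rfl
  · rfl
  · rfl
  rw [expU r, U_eq r]
  have hXr : X r = Real.log 8 - 2 * Real.log (r ^ 2 + 1) := rfl
  simp only [Pi.add_apply]
  rw [hXr, hX'def]
  field_simp
  ring

lemma integrand_cont : Continuous (fun r : ℝ =>
    r * ((r ^ 2 - 1) / (r ^ 2 + 1)) * Real.exp (U r) * (U r ^ 2 / 2)) := by
  have hU : Continuous U := by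
    have h1 : ∀ x : ℝ, ((x ^ 2 + 1) ^ 2 : ℝ) ≠ 0 := fun x => by positivity
    have h2 : ∀ x : ℝ, (8 : ℝ) / ((x ^ 2 + 1) ^ 2) ≠ 0 := fun x => by positivity
    unfold U
    exact (continuous_const.div (by continuity) h1).log h2
  exact (((continuous_id.mul ((continuous_pow 2 |>.sub continuous_const).div
      (by continuity) fun x => (t_pos x).ne')).mul (Real.continuous_exp.comp hU)).mul
      ((hU.pow 2).div_const 2))

lemma Faux_tendsto : Filter.Tendsto Faux Filter.atTop (nhds 0) := by
  have hcomp : Filter.Tendsto (fun r : ℝ => r ^ 2 + 1) Filter.atTop Filter.atTop :=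
    Filter.tendsto_atTop_add_const_right _ 1 (Filter.tendsto_pow_atTop two_ne_zero)
  set L := Real.log 8 with hL
  have h0 : Filter.Tendsto (fun t : ℝ => 1 / t) Filter.atTop (nhds 0) := by
    simpa [one_div] using tendsto_inv_atTop_zero
  have h1 : Filter.Tendsto (fun t : ℝ => Real.log t ^ 1 / t) Filter.atTop (nhds 0) := by
    simpa using Real.tendsto_pow_log_div_mul_add_atTop 1 0 1 one_ne_zero
  have h2 : Filter.Tendsto (fun t : ℝ => Real.log t ^ 2 / t) Filter.atTop (nhds 0) := by
    simpa using Real.tendsto_pow_log_div_mul_add_atTop 1 0 2 one_ne_zero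
  have hin : Filter.Tendsto (fun t : ℝ =>
      (2*L^2 - 4*L + 4) * (1/t) + (-8*L + 8) * (Real.log t ^ 1 / t)
        + 8 * (Real.log t ^ 2 / t)) Filter.atTop (nhds 0) := by
    have := ((h0.const_mul (2*L^2 - 4*L + 4)).add (h1.const_mul (-8*L + 8))).add
      (h2.const_mul 8)
    simpa using this
  have hout : Filter.Tendsto (fun t : ℝ =>
      ((-2*L^2 + 8*L - 16) * (1/t) + (8*L - 16) * (Real.log t ^ 1 / t)
        - 8 * (Real.log t ^ 2 / t))
      + (1/t) * ((2*L^2 - 4*L + 4) * (1/t) + (-8*L + 8) * (Real.log t ^ 1 / t)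
        + 8 * (Real.log t ^ 2 / t))) Filter.atTop (nhds 0) := by
    have := (((h0.const_mul (-2*L^2 + 8*L - 16)).add (h1.const_mul (8*L - 16))).sub
      (h2.const_mul 8)).add (h0.mul hin)
    simpa using this
  have hP : Filter.Tendsto (fun t : ℝ =>
      ((2 - 2 * t) * (L - 2 * Real.log t) ^ 2 + (8 * t - 4) * (L - 2 * Real.log t)
        + (4 - 16 * t)) / t ^ 2) Filter.atTop (nhds 0) := by
    apply hout.congr'
    filter_upwards [Filter.eventually_gt_atTop (0:ℝ)] with t ht
    have htne : t ≠ 0 := ht.ne'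
    field_simp
    ring
  have := hP.comp hcomp
  apply this.congr
  intro r
  simp only [Function.comp, Faux]
  rfl

theorem constant_C1 :
    ∫ r in Set.Ioi (0 : ℝ),
        r * ((r ^ 2 - 1) / (r ^ 2 + 1)) * Real.exp (U r) * (U r ^ 2 / 2) =
      12 * (1 - Real.log 2) := by
  set f' := fun r : ℝ => r * ((r ^ 2 - 1) / (r ^ 2 + 1)) * Real.exp (U r) * (U r ^ 2 / 2)
    with hf'
  have hderiv : ∀ x : ℝ, HasDerivAt Faux (f' x) x := Faux_deriv
  have hint1 : MeasureTheory.IntegrableOn f' (Set.Ioc 0 1) :=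
    integrand_cont.integrableOn_Ioc
  have hint2 : MeasureTheory.IntegrableOn f' (Set.Ioi 1) := by
    apply MeasureTheory.integrableOn_Ioi_deriv_of_nonneg
      (hderiv 1).continuousAt.continuousWithinAt (fun x _ => hderiv x) _ Faux_tendsto
    intro x hx
    have hx1 : (1:ℝ) < x := hx
    have h1 : 0 ≤ x * ((x ^ 2 - 1) / (x ^ 2 + 1)) := by
      apply mul_nonneg (by linarith)
      apply div_nonneg (by nlinarith) (by positivity)
    have : 0 ≤ f' x := by
      apply mul_nonneg (mul_nonneg h1 (Real.exp_pos _).le) (by positivity)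
    exact this
  have hint : MeasureTheory.IntegrableOn f' (Set.Ioi 0) := by
    rw [← Set.Ioc_union_Ioi_eq_Ioi (zero_le_one : (0:ℝ) ≤ 1)]
    exact hint1.union hint2
  rw [MeasureTheory.integral_Ioi_of_hasDerivAt_of_tendsto
    (hderiv 0).continuousAt.continuousWithinAt (fun x _ => hderiv x) hint Faux_tendsto]
  have h8 : Real.log 8 = 3 * Real.log 2 := by
    rw [show (8:ℝ) = 2 ^ 3 by norm_num, Real.log_pow]; push_cast; ring
  simp only [Faux]
  norm_num [h8]
  ring
end

section
/- For all real x ∈ (0,1] and all real p > 0, the inequality x · e^p · (log(1/x)/p)^p ≤ 1 holds. -/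
theorem elementary_log_power_inequality (x p : ℝ) (hx0 : 0 < x) (hx1 : x ≤ 1) (hp : 0 < p) :
    x * Real.exp p * (Real.log (1 / x) / p) ^ p ≤ 1 := by
  set t := Real.log (1 / x) with ht_def
  have ht0 : 0 ≤ t := by
    apply Real.log_nonneg
    rw [le_div_iff₀ hx0]; linarith
  have hxe : x = Real.exp (-t) := by
    rw [ht_def, one_div, Real.log_inv, neg_neg, Real.exp_log hx0]
  rcases eq_or_lt_of_le ht0 with h0 | h0
  · rw [← h0, zero_div, Real.zero_rpow hp.ne', mul_zero]
    norm_num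
  · have hy : 0 < t / p := div_pos h0 hp
    have hlog : Real.log (t / p) ≤ t / p - 1 := Real.log_le_sub_one_of_pos hy
    have hrw : (t / p) ^ p = Real.exp (p * Real.log (t / p)) := by
      rw [← Real.log_rpow hy, Real.exp_log (Real.rpow_pos_of_pos hy p)]
    have hle : (t / p) ^ p ≤ Real.exp (t - p) := by
      rw [hrw]
      apply Real.exp_le_exp.2
      have : p * Real.log (t / p) ≤ p * (t / p - 1) :=
        mul_le_mul_of_nonneg_left hlog hp.le
      calc p * Real.log (t / p) ≤ p * (t / p - 1) := this
        _ = t - p := by field_simp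
    calc x * Real.exp p * (t / p) ^ p
        ≤ Real.exp (-t) * Real.exp p * Real.exp (t - p) := by
          rw [← hxe]
          apply mul_le_mul_of_nonneg_left hle (by positivity)
      _ = 1 := by rw [← Real.exp_add, ← Real.exp_add]; ring_nf; exact Real.exp_zero
end

section
/- For k ∈ {4,5}, the function φ_k(η) := (1 + kη²) · η^{−2kη²/((kη−1)(η+1))}, defined for η ∈ (1/k, 1), has a critical point at η = 2/(k−1), i.e. φ_k'(2/(k−1)) = 0. -/
lemma phi_aux (k x : ℝ) (hx0 : 0 < x) (hd0 : (k * x - 1) * (x + 1) ≠ 0)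
    (hkey : 2 * k * (2 * x) * ((k * x - 1) * (x + 1)) -
        2 * k * x ^ 2 * (k * (x + 1) + (k * x - 1)) = 0)
    (hkey2 : 2 * k * x +
        (1 + k * x ^ 2) * (-(2 * k * x ^ 2 / ((k * x - 1) * (x + 1))) * x⁻¹) = 0) :
    deriv (fun η : ℝ =>
        (1 + k * η ^ 2) *
          Real.exp (-(2 * k * η ^ 2 / ((k * η - 1) * (η + 1))) * Real.log η)) x = 0 := by
  have hnum : HasDerivAt (fun η : ℝ => 2 * k * η ^ 2) (2 * k * (2 * x)) x := by
    have h := (hasDerivAt_pow 2 x).const_mul (2 * k)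
    convert h using 1 <;> first | rfl | (simp [id]; try ring)
  have hden : HasDerivAt (fun η : ℝ => (k * η - 1) * (η + 1))
      (k * (x + 1) + (k * x - 1)) x := by
    have h := (((hasDerivAt_id x).const_mul k).sub_const 1).mul
      ((hasDerivAt_id x).add_const 1)
    convert h using 1 <;> first | rfl | (simp [id]; try ring)
  have hq : HasDerivAt (fun η : ℝ => 2 * k * η ^ 2 / ((k * η - 1) * (η + 1))) 0 x := by
    have h := hnum.div hden hd0
    convert h using 1 <;> first | rfl | rw [hkey, zero_div]
  have hG : HasDerivAt
      (fun η : ℝ => -(2 * k * η ^ 2 / ((k * η - 1) * (η + 1))) * Real.log η)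
      (-0 * Real.log x + -(2 * k * x ^ 2 / ((k * x - 1) * (x + 1))) * x⁻¹) x :=
    hq.neg.mul (Real.hasDerivAt_log hx0.ne')
  have hE := hG.exp
  have hP : HasDerivAt (fun η : ℝ => 1 + k * η ^ 2) (k * (2 * x)) x := by
    have h := ((hasDerivAt_pow 2 x).const_mul k).const_add 1
    convert h using 1 <;> first | rfl | (simp [id]; try ring)
  have hF : HasDerivAt (fun η : ℝ =>
        (1 + k * η ^ 2) *
          Real.exp (-(2 * k * η ^ 2 / ((k * η - 1) * (η + 1))) * Real.log η)) _ x := hP.mul hE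
  rw [hF.deriv]
  have := hkey2
  calc k * (2 * x) *
        Real.exp (-(2 * k * x ^ 2 / ((k * x - 1) * (x + 1))) * Real.log x) +
      (1 + k * x ^ 2) *
        (Real.exp (-(2 * k * x ^ 2 / ((k * x - 1) * (x + 1))) * Real.log x) *
          (-0 * Real.log x + -(2 * k * x ^ 2 / ((k * x - 1) * (x + 1))) * x⁻¹))
      = Real.exp (-(2 * k * x ^ 2 / ((k * x - 1) * (x + 1))) * Real.log x) *
        (2 * k * x +
          (1 + k * x ^ 2) * (-(2 * k * x ^ 2 / ((k * x - 1) * (x + 1))) * x⁻¹)) := by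
        ring
    _ = 0 := by rw [hkey2, mul_zero]

theorem phi_critical_point (k : ℝ) (hk : k = 4 ∨ k = 5) :
    deriv (fun η : ℝ =>
        (1 + k * η ^ 2) *
          Real.exp (-(2 * k * η ^ 2 / ((k * η - 1) * (η + 1))) * Real.log η))
      (2 / (k - 1)) = 0 := by
  rcases hk with hk | hk <;> subst hk <;>
    refine phi_aux _ _ (by norm_num) (by norm_num) (by norm_num) (by norm_num)
end

section
/- Let p ≥ 1 and C > 0, and let a, b, c be real numbers with −(1−1/C)p ≤ a ≤ C and |b| + |c| ≤ Cp. Then there exists a constant K > 0 depending only on C such that |(1 + a/p + b/p² + c/p³)^p − e^a (1 + (1/p)(b − a²/2))| ≤ K e^a (1 + a⁶ + b⁶ + c⁶)/p² for all sufficiently large p. -/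
lemma aux_pow_le_one_add_pow_six (t : ℝ) {n : ℕ} (hn6 : n ≤ 6) :
    |t| ^ n ≤ 1 + t ^ 6 := by
  have h6 : (0:ℝ) ≤ t ^ 6 := by positivity
  rcases le_total (|t|) 1 with h | h
  · have := pow_le_one₀ (abs_nonneg t) h (n := n)
    linarith
  · have h1 : |t| ^ n ≤ |t| ^ 6 := pow_le_pow_right₀ h hn6
    have h2 : |t| ^ 6 = t ^ 6 := by rw [pow_abs, abs_of_nonneg h6]
    linarith

lemma aux_exp_diff_aux (u v M : ℝ) (hu : u ≤ M) (h : v ≤ u) :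
    |Real.exp u - Real.exp v| ≤ Real.exp M * |u - v| := by
  rw [abs_of_nonneg (sub_nonneg.2 (Real.exp_le_exp.2 h)),
      abs_of_nonneg (sub_nonneg.2 h)]
  have h1 : (v - u) + 1 ≤ Real.exp (v - u) := Real.add_one_le_exp _
  rw [Real.exp_sub] at h1
  have h2 : ((v - u) + 1) * Real.exp u ≤ Real.exp v :=
    (le_div_iff₀ (Real.exp_pos u)).1 h1
  have h3 : Real.exp u ≤ Real.exp M := Real.exp_le_exp.2 hu
  nlinarith [Real.exp_pos u, sub_nonneg.2 h]

lemma aux_exp_diff (u v M : ℝ) (hu : u ≤ M) (hv : v ≤ M) :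
    |Real.exp u - Real.exp v| ≤ Real.exp M * |u - v| := by
  rcases le_total v u with h | h
  · exact aux_exp_diff_aux u v M hu h
  · rw [abs_sub_comm, abs_sub_comm u v]
    exact aux_exp_diff_aux v u M hv h

lemma aux_exp_taylor (t M : ℝ) (hM : 1 ≤ M) (ht : t ≤ M) :
    |Real.exp t - 1 - t| ≤ (Real.exp M + 3) * t ^ 2 := by
  rcases le_total (|t|) 1 with h | h
  · have h1 := Real.abs_exp_sub_one_sub_id_le h
    nlinarith [Real.exp_pos M, sq_nonneg t]
  · have ht2 : 1 ≤ t ^ 2 := by nlinarith [sq_abs t]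
    have habs : |t| ≤ t ^ 2 := by nlinarith [sq_abs t]
    have h1 : Real.exp t ≤ Real.exp M := Real.exp_le_exp.2 ht
    have h2 : -t ≤ |t| := neg_le_abs t
    have h3 : t ≤ |t| := le_abs_self t
    rw [abs_le]
    refine ⟨by nlinarith [Real.exp_pos t], by nlinarith [Real.exp_pos t, Real.exp_pos M]⟩


lemma aux_sq3 (a b c : ℝ) : (b - a^2/2)^2 ≤ 3*(1 + a^6 + b^6 + c^6) := by
  have ha4 : a^4 ≤ 1 + a^6 := by
    have := aux_pow_le_one_add_pow_six a (n := 4) (by norm_num)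
    rwa [pow_abs, abs_of_nonneg (by positivity : (0:ℝ) ≤ a^4)] at this
  have hb2 : b^2 ≤ 1 + b^6 := by
    have := aux_pow_le_one_add_pow_six b (n := 2) (by norm_num)
    rwa [sq_abs] at this
  nlinarith [sq_nonneg (a^2 + b), sq_nonneg (c^3), sq_nonneg (a^3), sq_nonneg (b^3)]

lemma aux_cube (D a : ℝ) (hD1 : 1 ≤ D) : 2*D*(|a|+D)^3 ≤ 16*D^4*(1+a^6) := by
  have hD0 : (0:ℝ) < D := lt_of_lt_of_le one_pos hD1
  have hT : (1:ℝ) ≤ 1 + a^6 := by nlinarith [sq_nonneg (a^3)]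
  have f1 : |a|^3 ≤ 1 + a^6 := aux_pow_le_one_add_pow_six a (by norm_num)
  have f2 : |a|^2*D ≤ (1+a^6)*D := by
    have h := aux_pow_le_one_add_pow_six a (n := 2) (by norm_num)
    exact mul_le_mul_of_nonneg_right h hD0.le
  have f3 : |a| *D^2 ≤ (1+a^6)*D^2 := by
    have h := aux_pow_le_one_add_pow_six a (n := 1) (by norm_num)
    exact mul_le_mul_of_nonneg_right (by simpa using h) (by positivity)
  have f4 : D^3*1 ≤ D^3*(1+a^6) := mul_le_mul_of_nonneg_left hT (by positivity)
  have hpoly : 1 + 3*D + 3*D^2 ≤ 7*D^3 := by nlinarith [hD1, sq_nonneg (D-1)]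
  have hpolyT : (1 + 3*D + 3*D^2)*(1+a^6) ≤ 7*D^3*(1+a^6) :=
    mul_le_mul_of_nonneg_right hpoly (by linarith)
  nlinarith [f1, f2, f3, f4, hpolyT, hD0, abs_nonneg a]

lemma aux_prod2 (a b c : ℝ) : |a| *(|b|+|c|) ≤ 2*(1 + a^6 + b^6 + c^6) := by
  have ha2 : a^2 ≤ 1 + a^6 := by
    have := aux_pow_le_one_add_pow_six a (n := 2) (by norm_num); rwa [sq_abs] at this
  have hb2 : b^2 ≤ 1 + b^6 := by
    have := aux_pow_le_one_add_pow_six b (n := 2) (by norm_num); rwa [sq_abs] at this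
  have hc2 : c^2 ≤ 1 + c^6 := by
    have := aux_pow_le_one_add_pow_six c (n := 2) (by norm_num); rwa [sq_abs] at this
  nlinarith [sq_nonneg (|a| - |b|), sq_nonneg (|a| - |c|), sq_abs a, sq_abs b,
    sq_abs c, abs_nonneg a, abs_nonneg b, abs_nonneg c,
    pow_nonneg (sq_nonneg a) 3, pow_nonneg (sq_nonneg b) 3, pow_nonneg (sq_nonneg c) 3,
    sq_nonneg (a^3), sq_nonneg (b^3), sq_nonneg (c^3)]

lemma aux_bc (b c : ℝ) : |b| + |c| ≤ 2*(1 + b^6 + c^6) := by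
  have hb1 : |b| ≤ 1 + b^6 := by
    simpa using aux_pow_le_one_add_pow_six b (n := 1) (by norm_num)
  have hc1 : |c| ≤ 1 + c^6 := by
    simpa using aux_pow_le_one_add_pow_six c (n := 1) (by norm_num)
  have h1 : (0:ℝ) ≤ b^6 := by positivity
  have h2 : (0:ℝ) ≤ c^6 := by positivity
  linarith

lemma aux_34 (D : ℝ) (hD1 : 1 ≤ D) : 3 + D ≤ 4*D^4 := by
  nlinarith [sq_nonneg (D-1), sq_nonneg D, sq_nonneg (D^2-1)]

set_option maxHeartbeats 4000000 in
theorem taylor_expansion_power (C : ℝ) (hC : 0 < C) :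
    ∃ K > 0, ∃ p₀ : ℝ, ∀ p : ℝ, p₀ ≤ p → ∀ a b c : ℝ,
      -(1 - 1 / C) * p ≤ a → a ≤ C → |b| + |c| ≤ C * p →
      |(1 + a / p + b / p ^ 2 + c / p ^ 3) ^ p -
          Real.exp a * (1 + (1 / p) * (b - a ^ 2 / 2))| ≤
        K * Real.exp a * (1 + a ^ 6 + b ^ 6 + c ^ 6) / p ^ 2 := by
  set D := max C 1 with hDdef
  have hD1 : (1:ℝ) ≤ D := le_max_right _ _
  have hCD : C ≤ D := le_max_left _ _
  have hD0 : (0:ℝ) < D := lt_of_lt_of_le one_pos hD1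
  refine ⟨20*D^4*Real.exp (2*D) + 3*Real.exp (2*D) + 9, by positivity, 4*D^2, ?_⟩
  intro p hp a b c ha1 ha2 hbc
  have hp4 : 4*D^2 ≤ p := hp
  have hp1 : (1:ℝ) ≤ p := by nlinarith
  have hp0 : (0:ℝ) < p := by linarith
  -- hypotheses with D instead of C
  have ha2' : a ≤ D := ha2.trans hCD
  have hbc' : |b| + |c| ≤ D*p := hbc.trans (by nlinarith)
  have ha1' : -(1 - 1/D)*p ≤ a := by
    refine le_trans ?_ ha1
    have h1 : 1/D ≤ 1/C := one_div_le_one_div_of_le hC hCD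
    nlinarith
  have hb : |b| ≤ D*p := le_trans (le_add_of_nonneg_right (abs_nonneg c)) hbc'
  have hc : |c| ≤ D*p := le_trans (le_add_of_nonneg_left (abs_nonneg b)) hbc'
  -- polynomial helper facts
  have ha1abs : |a| ≤ 1 + a^6 := by
    simpa using aux_pow_le_one_add_pow_six a (n := 1) (by norm_num)
  have hc1abs : |c| ≤ 1 + c^6 := by
    simpa using aux_pow_le_one_add_pow_six c (n := 1) (by norm_num)
  have hb1abs : |b| ≤ 1 + b^6 := by
    simpa using aux_pow_le_one_add_pow_six b (n := 1) (by norm_num)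
  have ha2sq : a^2 ≤ 1 + a^6 := by
    have := aux_pow_le_one_add_pow_six a (n := 2) (by norm_num)
    rwa [sq_abs] at this
  have hb2sq : b^2 ≤ 1 + b^6 := by
    have := aux_pow_le_one_add_pow_six b (n := 2) (by norm_num)
    rwa [sq_abs] at this
  have hc2sq : c^2 ≤ 1 + c^6 := by
    have := aux_pow_le_one_add_pow_six c (n := 2) (by norm_num)
    rwa [sq_abs] at this
  have ha3abs : |a|^3 ≤ 1 + a^6 := aux_pow_le_one_add_pow_six a (by norm_num)
  have ha4 : a^4 ≤ 1 + a^6 := by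
    have := aux_pow_le_one_add_pow_six a (n := 4) (by norm_num)
    rwa [pow_abs, abs_of_nonneg (by positivity : (0:ℝ) ≤ a^4)] at this
  obtain ⟨S, hSdef⟩ : ∃ t : ℝ, t = 1 + a ^ 6 + b ^ 6 + c ^ 6 := ⟨_, rfl⟩
  rw [← hSdef]
  have hS1 : 1 ≤ S := by
    rw [hSdef]; nlinarith [sq_nonneg (a^3), sq_nonneg (b^3), sq_nonneg (c^3)]
  have ha6S : 1 + a^6 ≤ S := by
    rw [hSdef]; nlinarith [sq_nonneg (b^3), sq_nonneg (c^3)]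
  obtain ⟨x, hxdef⟩ : ∃ t : ℝ, t = a/p + b/p^2 + c/p^3 := ⟨_, rfl⟩
  obtain ⟨y, hydef⟩ : ∃ t : ℝ, t = b/p^2 + c/p^3 := ⟨_, rfl⟩
  have hxy : x = a/p + y := by rw [hxdef, hydef]; ring
  -- p*y and p^2*y bounds
  have hpyeq : p*y = b/p + c/p^2 := by rw [hydef]; field_simp
  have hpy : |p*y| ≤ D := by
    rw [hpyeq]
    calc |b/p + c/p^2| ≤ |b/p| + |c/p^2| := abs_add_le _ _
      _ = |b|/p + |c|/p^2 := by
          rw [abs_div, abs_div, abs_of_pos hp0, abs_of_pos (pow_pos hp0 2)]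
      _ ≤ |b|/p + |c|/p := by
          have hcc : |c|/p^2 ≤ |c|/p := by
            rw [div_le_div_iff₀ (by positivity) hp0]
            nlinarith [mul_le_mul_of_nonneg_left (show p ≤ p^2 by nlinarith) (abs_nonneg c)]
          linarith
      _ = (|b| + |c|)/p := by ring
      _ ≤ D := by rw [div_le_iff₀ hp0]; linarith
  have hp2y : p^2 * |y| ≤ |b| + |c| := by
    have h1 : p^2*y = b + c/p := by rw [hydef]; field_simp
    have h2 : p^2 * |y| = |p^2*y| := by
      rw [abs_mul, abs_of_pos (pow_pos hp0 2)]
    rw [h2, h1]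
    calc |b + c/p| ≤ |b| + |c/p| := abs_add_le _ _
      _ ≤ |b| + |c| := by
          rw [abs_div, abs_of_pos hp0]
          have := div_le_self (abs_nonneg c) hp1
          linarith
  have hpye : p*x = a + p*y := by rw [hxy]; field_simp
  have hpx : |p*x| ≤ |a| + D := by
    rw [hpye]
    exact (abs_add_le _ _).trans (by linarith)
  -- bounds on x
  have hD4p : 4*D ≤ p := by nlinarith [hD1, hp4]
  have hxhalf : x ≤ 1/2 := by
    have h1 : p*x ≤ 2*D := by
      have h2 := le_abs_self (p*y)
      nlinarith [hpye]
    have h2 : p*x ≤ p*(1/2) := by linarith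
    exact le_of_mul_le_mul_left h2 hp0
  have hDinv : D * (1/D) = 1 := by field_simp
  have hpxl : a - D ≤ p*x := by
    have h2 := neg_abs_le (p*y)
    nlinarith [hpye]
  have h5 : (1/D)*p - p - D ≤ p*x := by
    have ha1'' : (1/D)*p - p ≤ a := by nlinarith [ha1']
    linarith
  have hkey2 : 1 ≤ 2*D*(1+x) := by
    have h6 : 2*D*((1/D)*p - p - D) ≤ 2*D*(p*x) :=
      mul_le_mul_of_nonneg_left h5 (by positivity)
    have h7 : 2*D*((1/D)*p) = 2*p := by field_simp
    have hx1p : p*1 ≤ p*(2*D*(1+x)) := by nlinarith [h6, h7, hp4, sq_nonneg D]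
    exact le_of_mul_le_mul_left hx1p hp0
  have hkey1 : 1 ≤ 2*D*(1-x) := by
    have hh := mul_le_mul_of_nonneg_left hxhalf (show (0:ℝ) ≤ 2*D by positivity)
    linarith [hD1, hh]
  have hkey : 1 ≤ 2*D*(1-|x|) := by
    rcases abs_cases x with ⟨h, _⟩ | ⟨h, _⟩
    · rw [h]; exact hkey1
    · rw [h]; linarith [hkey2]
  have hpos : (0:ℝ) < 1 + x := by
    by_contra hcon
    push_neg at hcon
    have hh : 2*D*(1+x) ≤ 2*D*0 := mul_le_mul_of_nonneg_left hcon (by positivity)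
    norm_num at hh
    linarith [hkey2]
  have hxlt : |x| < 1 := by
    by_contra hcon
    push_neg at hcon
    have hh : 2*D*(1-|x|) ≤ 2*D*0 :=
      mul_le_mul_of_nonneg_left (by linarith) (by positivity)
    norm_num at hh
    linarith [hkey]
  -- log bound
  obtain ⟨R, hRdef⟩ : ∃ t : ℝ, t = Real.log (1+x) - x + x^2/2 := ⟨_, rfl⟩
  have hR2 : |R| ≤ 2*D * |x|^3 := by
    have hlog0 := Real.abs_log_sub_add_sum_range_le (x := -x) (by rwa [abs_neg]) 2
    have hsum : (∑ i ∈ Finset.range 2, (-x)^(i+1)/((i:ℝ)+1)) = -x + x^2/2 := by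
      simp [Finset.sum_range_succ]
      ring
    rw [hsum, sub_neg_eq_add, abs_neg] at hlog0
    have heq : -x + x^2/2 + Real.log (1+x) = R := by rw [hRdef]; ring
    rw [heq] at hlog0
    refine hlog0.trans ?_
    rw [div_le_iff₀ (by linarith [hxlt] : (0:ℝ) < 1 - |x|)]
    calc |x|^3 = |x|^3 * 1 := (mul_one _).symm
      _ ≤ |x|^3 * (2*D*(1-|x|)) :=
          mul_le_mul_of_nonneg_left hkey (by positivity)
      _ = 2*D * |x|^3*(1-|x|) := by ring
  -- rewrite the power via exp/log
  rw [show (1 + a/p + b/p^2 + c/p^3 : ℝ) = 1 + x from by rw [hxdef]; ring,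
      Real.rpow_def_of_pos hpos]
  obtain ⟨L, hLdef⟩ : ∃ t : ℝ, t = Real.log (1+x) * p := ⟨_, rfl⟩
  rw [← hLdef]
  obtain ⟨δ, hδdef⟩ : ∃ t : ℝ, t = (b - a^2/2)/p := ⟨_, rfl⟩
  obtain ⟨E, hEdef⟩ : ∃ t : ℝ, t = L - a - δ := ⟨_, rfl⟩
  have key : Real.exp L - Real.exp a * (1 + 1/p*(b - a^2/2)) =
      Real.exp a * (Real.exp (L-a) - 1 - δ) := by
    rw [hδdef, Real.exp_sub]
    field_simp
    ring
  rw [key, abs_mul, abs_of_pos (Real.exp_pos a)]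
  -- upper bounds on exponents
  have hlx : Real.log (1+x) ≤ x := by
    have := Real.log_le_sub_one_of_pos hpos
    linarith
  have hLa : L - a ≤ 2*D := by
    have h1 : L ≤ x*p := by
      rw [hLdef]; exact mul_le_mul_of_nonneg_right hlx hp0.le
    have h2 : p*y ≤ D := le_trans (le_abs_self _) hpy
    linarith [hpye, hD1]
  have hδ2D : δ ≤ 2*D := by
    rw [hδdef, div_le_iff₀ hp0]
    linarith [le_abs_self b, hb, sq_nonneg a, mul_nonneg hD0.le hp0.le]
  have hM1 : (1:ℝ) ≤ 2*D := by linarith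
  have htri : |Real.exp (L-a) - 1 - δ| ≤
      Real.exp (2*D) * |E| + (Real.exp (2*D) + 3) * δ^2 := by
    have h1 : Real.exp (L-a) - 1 - δ =
        (Real.exp (L-a) - Real.exp δ) + (Real.exp δ - 1 - δ) := by ring
    calc |Real.exp (L-a) - 1 - δ|
        ≤ |Real.exp (L-a) - Real.exp δ| + |Real.exp δ - 1 - δ| := by
          rw [h1]; exact abs_add_le _ _
      _ ≤ Real.exp (2*D) * |E| + (Real.exp (2*D) + 3) * δ^2 := by
          have h2 := aux_exp_diff (L-a) δ (2*D) hLa hδ2D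
          have h3 := aux_exp_taylor δ (2*D) hM1 hδ2D
          have h4 : L - a - δ = E := by rw [hEdef]
          rw [h4] at h2
          exact add_le_add h2 h3
  -- bound p^2 * δ^2
  have hδsq : p^2*δ^2 ≤ 3*S := by
    have h1 : p*δ = b - a^2/2 := by rw [hδdef]; field_simp
    calc p^2*δ^2 = (p*δ)^2 := by ring
      _ = (b - a^2/2)^2 := by rw [h1]
      _ ≤ 3*S := by rw [hSdef]; exact aux_sq3 a b c
  -- bound p^2 * |E|
  have hpx2 : p*x^2 = a^2/p + 2*a*y + p*y^2 := by
    rw [hxy]; field_simp; ring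
  have hEid : E = p*R + (c/p^2 - a*y - p*(y^2/2)) := by
    rw [hEdef, hRdef, hLdef, hδdef]
    linear_combination hpye + hpyeq - (1/2:ℝ) * hpx2
  have hEabs : |E| ≤ p * |R| + (|c|/p^2 + |a| * |y| + p*(y^2/2)) := by
    rw [hEid]
    calc |p*R + (c/p^2 - a*y - p*(y^2/2))|
        ≤ |p*R| + |c/p^2 - a*y - p*(y^2/2)| := abs_add_le _ _
      _ ≤ p * |R| + (|c|/p^2 + |a| * |y| + p*(y^2/2)) := by
          have e1 : |p*R| = p * |R| := by rw [abs_mul, abs_of_pos hp0]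
          have e2 : |c/p^2 - a*y - p*(y^2/2)| ≤ |c/p^2| + |a*y| + |p*(y^2/2)| := by
            calc |c/p^2 - a*y - p*(y^2/2)| ≤ |c/p^2 - a*y| + |p*(y^2/2)| := abs_sub _ _
              _ ≤ |c/p^2| + |a*y| + |p*(y^2/2)| := by
                  have := abs_sub (c/p^2) (a*y)
                  linarith
          have e3 : |c/p^2| = |c|/p^2 := by
            rw [abs_div, abs_of_pos (pow_pos hp0 2)]
          have e4 : |a*y| = |a| * |y| := abs_mul _ _
          have e5 : |p*(y^2/2)| = p*(y^2/2) := abs_of_nonneg (by positivity)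
          rw [e3, e4, e5] at e2
          linarith [e1, e2]
  have hB1 : p^3 * |R| ≤ 16*D^4*(1+a^6) := by
    have h1 : p^3 * |R| ≤ p^3*(2*D * |x|^3) :=
      mul_le_mul_of_nonneg_left hR2 (pow_pos hp0 3).le
    have h2 : p^3*(2*D * |x|^3) = 2*D * |p*x|^3 := by
      rw [abs_mul, abs_of_pos hp0, mul_pow]
      ring
    have h3 : |p*x|^3 ≤ (|a|+D)^3 := pow_le_pow_left₀ (abs_nonneg _) hpx 3
    calc p^3 * |R| ≤ 2*D * |p*x|^3 := by linarith [h1, h2.symm.le, h2.le]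
      _ ≤ 2*D*(|a|+D)^3 := mul_le_mul_of_nonneg_left h3 (by positivity)
      _ ≤ 16*D^4*(1+a^6) := aux_cube D a hD1
  have hB2 : |c| ≤ S := by
    rw [hSdef]
    have h1 : (0:ℝ) ≤ a^6 := by positivity
    have h2 : (0:ℝ) ≤ b^6 := by positivity
    linarith [hc1abs]
  have hB3 : p^2*(|a| * |y|) ≤ 2*S := by
    have h1 : p^2*(|a| * |y|) = |a| *(p^2 * |y|) := by ring
    have h2 : |a| *(p^2 * |y|) ≤ |a| *(|b|+|c|) :=
      mul_le_mul_of_nonneg_left hp2y (abs_nonneg a)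
    have h3 : |a| * (|b|+|c|) ≤ 2*S := by
      rw [hSdef]; exact aux_prod2 a b c
    linarith [h1.le, h2, h3]
  have hB4 : p^3*(y^2/2) ≤ D*S := by
    have hpyle : p * |y| ≤ D := by
      have : |p*y| = p * |y| := by rw [abs_mul, abs_of_pos hp0]
      linarith [hpy, this.symm.le, this.le]
    have h1 : p^3*(y^2/2) = (p * |y|)*(p^2 * |y|)/2 := by
      rw [← sq_abs y]; ring
    have h2 : (p * |y|)*(p^2 * |y|) ≤ D*(|b|+|c|) := by
      have hy0 : 0 ≤ p^2 * |y| := by positivity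
      exact mul_le_mul hpyle hp2y hy0 hD0.le
    have h3 : D*(|b|+|c|) ≤ D*(2*S) := by
      refine mul_le_mul_of_nonneg_left ?_ hD0.le
      rw [hSdef]
      have h1 : (0:ℝ) ≤ a^6 := by positivity
      linarith [aux_bc b c]
    rw [h1]
    linarith
  have hE2 : p^2 * |E| ≤ 20*D^4*S := by
    have step : p^2 * |E| ≤ p^3 * |R| + |c| + p^2*(|a| * |y|) + p^3*(y^2/2) := by
      have h0 := mul_le_mul_of_nonneg_left hEabs (pow_pos hp0 2).le
      have he : p^2*(p * |R| + (|c|/p^2 + |a| * |y| + p*(y^2/2))) =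
          p^3 * |R| + |c| + p^2*(|a| * |y|) + p^3*(y^2/2) := by
        field_simp
        ring
      linarith [h0, he.le, he.symm.le]
    have hD4a : 16*D^4*(1+a^6) ≤ 16*D^4*S :=
      mul_le_mul_of_nonneg_left ha6S (by positivity)
    have hfin : 3*S + D*S ≤ 4*D^4*S := by
      have h2 := mul_le_mul_of_nonneg_right (aux_34 D hD1) (by linarith : (0:ℝ) ≤ S)
      linarith
    linarith [step, hB1, hB2, hB3, hB4, hD4a, hfin]
  -- final combination
  rw [le_div_iff₀ (pow_pos hp0 2)]
  have hfinal : Real.exp a * |Real.exp (L-a) - 1 - δ| * p^2 ≤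
      Real.exp a * (Real.exp (2*D) * (p^2 * |E|) + (Real.exp (2*D) + 3) * (p^2*δ^2)) := by
    have h1 := mul_le_mul_of_nonneg_left htri (Real.exp_pos a).le
    have h2 := mul_le_mul_of_nonneg_right h1 (pow_pos hp0 2).le
    calc Real.exp a * |Real.exp (L-a) - 1 - δ| * p^2
        ≤ Real.exp a * (Real.exp (2*D) * |E| + (Real.exp (2*D) + 3) * δ^2) * p^2 := h2
      _ = Real.exp a * (Real.exp (2*D) * (p^2 * |E|) + (Real.exp (2*D) + 3) * (p^2*δ^2)) := by
          ring
  refine hfinal.trans ?_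
  have g1 : Real.exp (2*D) * (p^2 * |E|) ≤ Real.exp (2*D) * (20*D^4*S) :=
    mul_le_mul_of_nonneg_left hE2 (Real.exp_pos _).le
  have g2 : (Real.exp (2*D) + 3) * (p^2*δ^2) ≤ (Real.exp (2*D) + 3) * (3*S) :=
    mul_le_mul_of_nonneg_left hδsq (by positivity)
  calc Real.exp a * (Real.exp (2*D) * (p^2 * |E|) + (Real.exp (2*D) + 3) * (p^2*δ^2))
      ≤ Real.exp a * (Real.exp (2*D) * (20*D^4*S) + (Real.exp (2*D) + 3) * (3*S)) := by
        refine mul_le_mul_of_nonneg_left ?_ (Real.exp_pos a).le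
        linarith
    _ = (20*D^4*Real.exp (2*D) + 3*Real.exp (2*D) + 9) * Real.exp a * S := by ring
end
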